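/- With π(x) = xₙ/x₁ on the half-space model of hyperbolic n-space, the function s ↦ α(s) := 1/(1+s²) satisfies g(∇π, ∇π) = 1/(α ∘ π), i.e., the submersion π : (Ȟⁿ, g) → ((0,∞), α(s) ds²) is Riemannian. -/

import Mathlib

theorem stmt11 (n : ℕ) (hn : 2 ≤ n) (x : EuclideanSpace ℝ (Fin n))
    (hx1 : 0 < x ⟨0, by omega⟩) (hxn : 0 < x ⟨n-1, by omega⟩)
    (α : ℝ → ℝ) (hα : α = fun s => 1 / (1 + s^2)) :
    let i1 : Fin n := ⟨0, by omega⟩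
    let iN : Fin n := ⟨n-1, by omega⟩
    let πf : EuclideanSpace ℝ (Fin n) → ℝ := fun y => y iN / y i1
    let gradπ : EuclideanSpace ℝ (Fin n) := (x i1)^2 • gradient πf x
    -- g(∇π, ∇π) = 1/(α ∘ π)
    ((x i1)^2)⁻¹ * (inner ℝ gradπ gradπ : ℝ) = 1 / α (πf x) := by
  intro i1 iN πf gradπ
  have hne : (i1 : Fin n) ≠ iN := by
    simp only [i1, iN, Ne, Fin.mk.injEq]
    omega
  have hx1' : x i1 ≠ 0 := ne_of_gt hx1
  -- the gradient vector
  set g : EuclideanSpace ℝ (Fin n) :=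
    (1 / x i1) • EuclideanSpace.single iN (1:ℝ)
      - (x iN / (x i1)^2) • EuclideanSpace.single i1 (1:ℝ) with hg
  have hgrad : HasGradientAt πf g x := by
    rw [hasGradientAt_iff_hasFDerivAt]
    have hN : HasFDerivAt (fun y : EuclideanSpace ℝ (Fin n) => y iN)
        (EuclideanSpace.proj iN : EuclideanSpace ℝ (Fin n) →L[ℝ] ℝ) x := by
      exact (EuclideanSpace.proj (𝕜 := ℝ) iN).hasFDerivAt
    have h1 : HasFDerivAt (fun y : EuclideanSpace ℝ (Fin n) => y i1)
        (EuclideanSpace.proj i1 : EuclideanSpace ℝ (Fin n) →L[ℝ] ℝ) x := by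
      exact (EuclideanSpace.proj (𝕜 := ℝ) i1).hasFDerivAt
    have hinv : HasFDerivAt (fun y : EuclideanSpace ℝ (Fin n) => (y i1)⁻¹)
        ((-((x i1)^2)⁻¹) • (EuclideanSpace.proj i1 : EuclideanSpace ℝ (Fin n) →L[ℝ] ℝ)) x := by
      have := (hasDerivAt_inv hx1').comp_hasFDerivAt x h1
      simpa [Function.comp_def] using this
    have hmul := hN.mul hinv
    have hπ : πf = fun y : EuclideanSpace ℝ (Fin n) => y iN * (y i1)⁻¹ := by
      funext y; exact div_eq_mul_inv _ _
    rw [hπ]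
    refine hmul.congr_fderiv ?_
    apply ContinuousLinearMap.ext
    intro v
    simp only [InnerProductSpace.toDual_apply_apply, ContinuousLinearMap.smul_apply,
      ContinuousLinearMap.sub_apply, PiLp.proj_apply, smul_eq_mul]
    rw [hg, inner_sub_left, real_inner_smul_left, real_inner_smul_left,
      EuclideanSpace.inner_single_left, EuclideanSpace.inner_single_left]
    push_cast
    simp only [Pi.add_apply, Pi.smul_apply, Pi.neg_apply, smul_eq_mul, conj_trivial, PiLp.proj_apply]
    field_simp
    ring
  have hgx : gradient πf x = g := hgrad.gradient
  have hNN : (inner ℝ (EuclideanSpace.single iN (1:ℝ)) (EuclideanSpace.single iN (1:ℝ)) : ℝ) = 1 := by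
    rw [EuclideanSpace.inner_single_left]; simp
  have h11 : (inner ℝ (EuclideanSpace.single i1 (1:ℝ)) (EuclideanSpace.single i1 (1:ℝ)) : ℝ) = 1 := by
    rw [EuclideanSpace.inner_single_left]; simp
  have hN1 : (inner ℝ (EuclideanSpace.single iN (1:ℝ)) (EuclideanSpace.single i1 (1:ℝ)) : ℝ) = 0 := by
    rw [EuclideanSpace.inner_single_left]; simp [Ne.symm hne]
  have h1N : (inner ℝ (EuclideanSpace.single i1 (1:ℝ)) (EuclideanSpace.single iN (1:ℝ)) : ℝ) = 0 := by
    rw [EuclideanSpace.inner_single_left]; simp [hne]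
  have hgg : (inner ℝ g g : ℝ) = 1 / (x i1)^2 + (x iN)^2 / (x i1)^4 := by
    rw [hg, inner_sub_left, inner_sub_right, inner_sub_right,
      real_inner_smul_left, real_inner_smul_left, real_inner_smul_left,
      real_inner_smul_left, real_inner_smul_right, real_inner_smul_right,
      real_inner_smul_right, real_inner_smul_right, hNN, h11, hN1, h1N]
    field_simp
    ring
  simp only [gradπ, hgx, inner_smul_left, inner_smul_right, hgg, hα, πf, conj_trivial]
  push_cast
  field_simp
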